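/- For every n ≥ 0, ∑_{j=0}^{n} (−1)^{n−j}·C(n,j)·C(n+j,j)·H_j = 2·H_n, where H_m = ∑_{k=1}^{m} 1/k is the m-th harmonic number. -/

import Mathlib

open Finset Function

/-! Auxiliary lemmas -/

lemma neg_one_sq_pow (k : ℕ) : (-1 : ℝ) ^ k * (-1 : ℝ) ^ k = 1 := by
  rw [← pow_add]
  exact Even.neg_one_pow ⟨k, rfl⟩

lemma fwdDiff_choose_real (j : ℕ) :
    fwdDiff 1 (fun x => (x.choose (j + 1) : ℝ) : ℕ → ℝ) = fun x => (x.choose j : ℝ) := by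
  ext n
  simp [fwdDiff, Nat.choose_succ_succ' n j]

lemma fwdDiff_iter_choose_real (k j : ℕ) :
    (fwdDiff 1)^[k] (fun x => (x.choose (k + j) : ℝ) : ℕ → ℝ) = fun x => (x.choose j : ℝ) := by
  induction k generalizing j with
  | zero => simp
  | succ k IH =>
    rw [Function.iterate_succ_apply', show k + 1 + j = k + (j + 1) by omega, IH (j + 1),
      fwdDiff_choose_real]

/-- Finite-difference evaluation: `∑_t (-1)^(m-t) C(m,t) C(a+t, m+j) = C(a,j)`. -/
lemma sum_S1 (m j a : ℕ) :
    ∑ t ∈ Finset.range (m + 1),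
      (-1 : ℝ) ^ (m - t) * (m.choose t : ℝ) * ((a + t).choose (m + j) : ℝ)
      = (a.choose j : ℝ) := by
  have h := fwdDiff_iter_eq_sum_shift (1 : ℕ) (fun x => (x.choose (m + j) : ℝ)) m a
  rw [fwdDiff_iter_choose_real m j] at h
  refine Eq.trans (Finset.sum_congr rfl fun t _ => ?_) h.symm
  have ht : a + t • 1 = a + t := by simp
  rw [ht, zsmul_eq_mul]
  push_cast
  ring

/-- Vanishing of the `(n+1)`-st difference of a degree-`n` binomial. -/
lemma sum_S2 (n a : ℕ) :
    ∑ t ∈ Finset.range (n + 2),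
      (-1 : ℝ) ^ (n + 1 - t) * ((n + 1).choose t : ℝ) * ((a + t).choose n : ℝ) = 0 := by
  have h := fwdDiff_iter_eq_sum_shift (1 : ℕ) (fun x => (x.choose n : ℝ)) (n + 1) a
  have h2 : (fwdDiff 1)^[n + 1] (fun x => (x.choose n : ℝ) : ℕ → ℝ) a = 0 := by
    rw [Function.iterate_succ_apply']
    have e : (fwdDiff 1)^[n] (fun x => (x.choose n : ℝ) : ℕ → ℝ) = fun _ => (1 : ℝ) := by
      have := fwdDiff_iter_choose_real n 0
      simpa using this
    rw [e]
    simp [fwdDiff]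
  rw [h2] at h
  refine Eq.trans (Finset.sum_congr rfl fun t _ => ?_) h.symm
  have ht : a + t • 1 = a + t := by simp
  rw [ht, zsmul_eq_mul]
  push_cast
  ring

/-- Sign flip for alternating sums. -/
lemma signflip (N : ℕ) (f : ℕ → ℝ) :
    ∑ t ∈ Finset.range (N + 1), (-1 : ℝ) ^ t * f t
      = (-1 : ℝ) ^ N * ∑ t ∈ Finset.range (N + 1), (-1 : ℝ) ^ (N - t) * f t := by
  rw [Finset.mul_sum]
  apply Finset.sum_congr rfl
  intro t ht
  rw [Finset.mem_range] at ht
  have e : (-1 : ℝ) ^ N = (-1 : ℝ) ^ (N - t) * (-1 : ℝ) ^ t := by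
    rw [← pow_add]
    congr 1
    omega
  rw [e]
  have h2 := neg_one_sq_pow (N - t)
  linear_combination (-(-1 : ℝ) ^ t * f t) * h2

/-- Lemma A: `∑_{j=i}^n (-1)^(n-j) C(n,j) C(n+j,j) C(j,i) = C(n,i) C(n+i,i)`. -/
lemma lemmaA (n i : ℕ) (hi : i ≤ n) :
    ∑ j ∈ Finset.Icc i n,
      (-1 : ℝ) ^ (n - j) * (n.choose j : ℝ) * ((n + j).choose j : ℝ) * (j.choose i : ℝ)
      = (n.choose i : ℝ) * ((n + i).choose i : ℝ) := by
  rw [← Finset.Ico_add_one_right_eq_Icc, Finset.sum_Ico_eq_sum_range]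
  have hm : n + 1 - i = (n - i) + 1 := by omega
  rw [hm]
  set m := n - i with hmdef
  have key : ∀ t ∈ Finset.range (m + 1),
      (-1 : ℝ) ^ (n - (i + t)) * (n.choose (i + t) : ℝ) * ((n + (i + t)).choose (i + t) : ℝ) *
        ((i + t).choose i : ℝ)
      = (n.choose i : ℝ) *
        ((-1 : ℝ) ^ (m - t) * (m.choose t : ℝ) * ((n + i + t).choose (m + i) : ℝ)) := by
    intro t ht
    rw [Finset.mem_range] at ht
    have h1 : n - (i + t) = m - t := by omega
    have h2 : (n.choose (i + t)) * ((i + t).choose i) = (n.choose i) * (m.choose t) := by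
      have := Nat.choose_mul (n := n) (show i ≤ i + t by omega)
      simpa [hmdef, Nat.add_sub_cancel_left] using this
    have h3 : (n + (i + t)).choose (i + t) = (n + i + t).choose (m + i) := by
      have e2 : m + i = n := by omega
      rw [show n + (i + t) = n + i + t by ring, e2]
      rw [show n + i + t = (i + t) + n by ring]
      exact Nat.choose_symm_add
    have h2' : ((n.choose (i + t)) : ℝ) * ((i + t).choose i : ℝ)
        = (n.choose i : ℝ) * (m.choose t : ℝ) := by exact_mod_cast congrArg (Nat.cast : ℕ → ℝ) h2
    rw [h1, h3]
    linear_combination ((-1 : ℝ) ^ (m - t) * ((n + i + t).choose (m + i) : ℝ)) * h2'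
  rw [Finset.sum_congr rfl key, ← Finset.mul_sum]
  have hs := sum_S1 m i (n + i)
  rw [hs]

/-- Lemma C: `∑_{i=1}^{n+1} (-1)^(i-1) C(n+1,i) C(n+i,i) = 1`. -/
lemma lemmaC (n : ℕ) :
    ∑ i ∈ Finset.Icc 1 (n + 1),
      (-1 : ℝ) ^ (i - 1) * ((n + 1).choose i : ℝ) * ((n + i).choose i : ℝ) = 1 := by
  have hS := sum_S2 n n
  rw [Finset.sum_range_succ'] at hS
  have hS' : ∑ k ∈ Finset.range (n + 1),
      (-1 : ℝ) ^ (n - k) * (((n + 1).choose (k + 1) : ℝ) * ((n + (k + 1)).choose n : ℝ))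
      = -(-1 : ℝ) ^ (n + 1) := by
    have e : ∀ k ∈ Finset.range (n + 1),
        (-1 : ℝ) ^ (n + 1 - (k + 1)) * ((n + 1).choose (k + 1) : ℝ) *
          ((n + (k + 1)).choose n : ℝ)
        = (-1 : ℝ) ^ (n - k) * (((n + 1).choose (k + 1) : ℝ) * ((n + (k + 1)).choose n : ℝ)) := by
      intro k _
      rw [show n + 1 - (k + 1) = n - k by omega]
      ring
    rw [Finset.sum_congr rfl e] at hS
    have e0 : (-1 : ℝ) ^ (n + 1 - 0) * ((n + 1).choose 0 : ℝ) * ((n + 0).choose n : ℝ)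
        = (-1 : ℝ) ^ (n + 1) := by simp
    rw [e0] at hS
    linarith
  have e1 : ∑ i ∈ Finset.Icc 1 (n + 1),
      (-1 : ℝ) ^ (i - 1) * ((n + 1).choose i : ℝ) * ((n + i).choose i : ℝ)
      = ∑ t ∈ Finset.range (n + 1),
        (-1 : ℝ) ^ t * (((n + 1).choose (t + 1) : ℝ) * ((n + (t + 1)).choose n : ℝ)) := by
    rw [← Finset.Ico_add_one_right_eq_Icc, Finset.sum_Ico_eq_sum_range]
    apply Finset.sum_congr (by norm_num)
    intro t _
    rw [show 1 + t = t + 1 by omega]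
    have hsym : (n + (t + 1)).choose (t + 1) = (n + (t + 1)).choose n := by
      rw [show n + (t + 1) = (t + 1) + n by ring]
      exact Nat.choose_symm_add
    rw [hsym, Nat.add_sub_cancel]
    ring
  rw [e1, signflip n (fun t => ((n + 1).choose (t + 1) : ℝ) * ((n + (t + 1)).choose n : ℝ)), hS']
  have h2 := neg_one_sq_pow n
  have e3 : (-1 : ℝ) ^ (n + 1) = -(-1 : ℝ) ^ n := by rw [pow_succ]; ring
  rw [e3]
  linear_combination h2

/-- The ℕ-valued contiguous relation. -/
lemma lemmaD_nat (n i : ℕ) (hi : i ≤ n + 1) :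
    (n + 1) * ((n + 1).choose i) * ((n + 1 + i).choose i)
      = (n + 1) * (n.choose i) * ((n + i).choose i)
        + 2 * i * ((n + 1).choose i) * ((n + i).choose i) := by
  have h1 : (n + i).choose i * (n + i + 1) = (n + i + 1).choose i * (n + i + 1 - i) :=
    Nat.choose_mul_succ_eq (n + i) i
  have h1' : (n + i).choose i * (n + i + 1) = (n + 1 + i).choose i * (n + 1) := by
    rw [h1, show n + i + 1 - i = n + 1 by omega, show n + i + 1 = n + 1 + i by ring]
  have h2 : n.choose i * (n + 1) = (n + 1).choose i * (n + 1 - i) :=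
    Nat.choose_mul_succ_eq n i
  have expand : (n + 1 - i) + 2 * i = n + 1 + i := by omega
  calc (n + 1) * ((n + 1).choose i) * ((n + 1 + i).choose i)
      = ((n + 1 + i).choose i * (n + 1)) * ((n + 1).choose i) := by ring
    _ = ((n + i).choose i * (n + i + 1)) * ((n + 1).choose i) := by rw [h1']
    _ = ((n + 1).choose i * ((n + 1 - i) + 2 * i)) * ((n + i).choose i) := by
        rw [expand, show n + i + 1 = n + 1 + i by ring]; ring
    _ = ((n + 1).choose i * (n + 1 - i)) * ((n + i).choose i)
          + 2 * i * ((n + 1).choose i) * ((n + i).choose i) := by ring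
    _ = (n.choose i * (n + 1)) * ((n + i).choose i)
          + 2 * i * ((n + 1).choose i) * ((n + i).choose i) := by rw [h2]
    _ = (n + 1) * (n.choose i) * ((n + i).choose i)
          + 2 * i * ((n + 1).choose i) * ((n + i).choose i) := by ring

/-- Alternating-sign binomial/harmonic identity (Lemma B). -/
lemma lemmaB (n : ℕ) :
    ∑ i ∈ Finset.Icc 1 n,
      (-1 : ℝ) ^ (i - 1) * (n.choose i : ℝ) * ((n + i).choose i : ℝ) / (i : ℝ)
      = 2 * ∑ k ∈ Finset.Icc 1 n, (1 : ℝ) / (k : ℝ) := by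
  induction n with
  | zero => simp
  | succ n IH =>
    have step : ∀ i ∈ Finset.Icc 1 (n + 1),
        (-1 : ℝ) ^ (i - 1) * ((n + 1).choose i : ℝ) * ((n + 1 + i).choose i : ℝ) / (i : ℝ)
        = (-1 : ℝ) ^ (i - 1) * (n.choose i : ℝ) * ((n + i).choose i : ℝ) / (i : ℝ)
          + (2 / ((n : ℝ) + 1)) *
            ((-1 : ℝ) ^ (i - 1) * ((n + 1).choose i : ℝ) * ((n + i).choose i : ℝ)) := by
      intro i hi
      rw [Finset.mem_Icc] at hi
      obtain ⟨h1, h2⟩ := hi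
      have hD := lemmaD_nat n i h2
      have hDR : ((n : ℝ) + 1) * ((n + 1).choose i : ℝ) * ((n + 1 + i).choose i : ℝ)
          = ((n : ℝ) + 1) * (n.choose i : ℝ) * ((n + i).choose i : ℝ)
            + 2 * (i : ℝ) * ((n + 1).choose i : ℝ) * ((n + i).choose i : ℝ) := by
        exact_mod_cast congrArg (Nat.cast : ℕ → ℝ) hD
      have hi0 : (i : ℝ) ≠ 0 := by
        have : 0 < i := h1
        positivity
      have hn0 : (n : ℝ) + 1 ≠ 0 := by positivity
      have key : ((n + 1).choose i : ℝ) * ((n + 1 + i).choose i : ℝ) / (i : ℝ)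
          = (n.choose i : ℝ) * ((n + i).choose i : ℝ) / (i : ℝ)
            + (2 / ((n : ℝ) + 1)) * (((n + 1).choose i : ℝ) * ((n + i).choose i : ℝ)) := by
        rw [div_add' _ _ _ hi0, div_eq_div_iff hi0 hi0]
        field_simp
        linear_combination hDR
      linear_combination ((-1 : ℝ) ^ (i - 1)) * key
    rw [Finset.sum_congr rfl step, Finset.sum_add_distrib, ← Finset.mul_sum, lemmaC n]
    have topzero : ∑ i ∈ Finset.Icc 1 (n + 1),
        (-1 : ℝ) ^ (i - 1) * (n.choose i : ℝ) * ((n + i).choose i : ℝ) / (i : ℝ)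
        = ∑ i ∈ Finset.Icc 1 n,
          (-1 : ℝ) ^ (i - 1) * (n.choose i : ℝ) * ((n + i).choose i : ℝ) / (i : ℝ) := by
      rw [Finset.sum_Icc_succ_top (by omega : 1 ≤ n + 1)]
      simp [Nat.choose_succ_self]
    rw [topzero, IH, Finset.sum_Icc_succ_top (show 1 ≤ n + 1 by omega)
      (fun k : ℕ => (1 : ℝ) / (k : ℝ))]
    push_cast
    ring

/-- Harmonic numbers as alternating binomial sums (Lemma H). -/
lemma lemmaH (j : ℕ) :
    ∑ i ∈ Finset.Icc 1 j, (-1 : ℝ) ^ (i - 1) * (j.choose i : ℝ) / (i : ℝ)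
      = ∑ k ∈ Finset.Icc 1 j, (1 : ℝ) / (k : ℝ) := by
  induction j with
  | zero => simp
  | succ j IH =>
    have hR : ∑ i ∈ Finset.range (j + 2), (-1 : ℝ) ^ i * ((j + 1).choose i : ℝ) = 0 := by
      have h := Int.alternating_sum_range_choose_of_ne (n := j + 1) (by omega)
      exact_mod_cast congrArg (Int.cast : ℤ → ℝ) h
    rw [Finset.sum_range_succ'] at hR
    have hR' : ∑ t ∈ Finset.range (j + 1), (-1 : ℝ) ^ t * ((j + 1).choose (t + 1) : ℝ) = 1 := by
      have e : ∀ t ∈ Finset.range (j + 1),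
          (-1 : ℝ) ^ (t + 1) * ((j + 1).choose (t + 1) : ℝ)
          = -((-1 : ℝ) ^ t * ((j + 1).choose (t + 1) : ℝ)) := by
        intro t _
        ring
      have hsum : ∑ t ∈ Finset.range (j + 1),
          ((-1 : ℝ) ^ (t + 1) * ((j + 1).choose (t + 1) : ℝ))
          = -∑ t ∈ Finset.range (j + 1), ((-1 : ℝ) ^ t * ((j + 1).choose (t + 1) : ℝ)) := by
        rw [← Finset.sum_neg_distrib]
        exact Finset.sum_congr rfl e
      rw [hsum] at hR
      simp only [pow_zero, one_mul, Nat.choose_zero_right, Nat.cast_one] at hR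
      linarith
    have alt : ∑ i ∈ Finset.Icc 1 (j + 1), (-1 : ℝ) ^ (i - 1) * ((j + 1).choose i : ℝ) = 1 := by
      rw [← Finset.Ico_add_one_right_eq_Icc, Finset.sum_Ico_eq_sum_range]
      rw [show j + 1 + 1 - 1 = j + 1 by omega]
      refine Eq.trans (Finset.sum_congr rfl fun t _ => ?_) hR'
      rw [show 1 + t = t + 1 by omega, Nat.add_sub_cancel]
    have pascal : ∀ i ∈ Finset.Icc 1 (j + 1),
        (-1 : ℝ) ^ (i - 1) * ((j + 1).choose i : ℝ) / (i : ℝ)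
        = (-1 : ℝ) ^ (i - 1) * (j.choose i : ℝ) / (i : ℝ)
          + (1 / ((j : ℝ) + 1)) * ((-1 : ℝ) ^ (i - 1) * ((j + 1).choose i : ℝ)) := by
      intro i hi
      rw [Finset.mem_Icc] at hi
      obtain ⟨h1, h2⟩ := hi
      obtain ⟨i', rfl⟩ : ∃ i', i = i' + 1 := ⟨i - 1, by omega⟩
      have hp : (j + 1).choose (i' + 1) = j.choose i' + j.choose (i' + 1) :=
        Nat.choose_succ_succ' j i'
      have hmul : (j + 1) * j.choose i' = (j + 1).choose (i' + 1) * (i' + 1) :=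
        Nat.add_one_mul_choose_eq j i'
      have hmulR : ((j : ℝ) + 1) * (j.choose i' : ℝ)
          = ((j + 1).choose (i' + 1) : ℝ) * ((i' : ℝ) + 1) := by
        exact_mod_cast congrArg (Nat.cast : ℕ → ℝ) hmul
      have hpR : (((j + 1).choose (i' + 1) : ℝ))
          = (j.choose i' : ℝ) + (j.choose (i' + 1) : ℝ) := by
        exact_mod_cast congrArg (Nat.cast : ℕ → ℝ) hp
      have hi0 : ((i' : ℝ) + 1) ≠ 0 := by positivity
      have hj0 : ((j : ℝ) + 1) ≠ 0 := by positivity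
      have key : ((j + 1).choose (i' + 1) : ℝ) / ((i' : ℝ) + 1)
          = (j.choose (i' + 1) : ℝ) / ((i' : ℝ) + 1)
            + (1 / ((j : ℝ) + 1)) * ((j + 1).choose (i' + 1) : ℝ) := by
        have hw : ((j + 1).choose (i' + 1) : ℝ) / ((i' : ℝ) + 1)
            - (j.choose (i' + 1) : ℝ) / ((i' : ℝ) + 1)
            = (j.choose i' : ℝ) / ((i' : ℝ) + 1) := by
          rw [div_sub_div_same]
          congr 1
          linarith [hpR]
        have hq : (j.choose i' : ℝ) / ((i' : ℝ) + 1)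
            = ((j + 1).choose (i' + 1) : ℝ) / ((j : ℝ) + 1) := by
          rw [div_eq_div_iff hi0 hj0]
          linear_combination hmulR
        have h3 : (1 / ((j : ℝ) + 1)) * ((j + 1).choose (i' + 1) : ℝ)
            = ((j + 1).choose (i' + 1) : ℝ) / ((j : ℝ) + 1) := by ring
        linarith
      simp only [Nat.add_sub_cancel]
      push_cast
      linear_combination ((-1 : ℝ) ^ i') * key
    rw [Finset.sum_congr rfl pascal, Finset.sum_add_distrib, ← Finset.mul_sum, alt]
    have topzero : ∑ i ∈ Finset.Icc 1 (j + 1),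
        (-1 : ℝ) ^ (i - 1) * (j.choose i : ℝ) / (i : ℝ)
        = ∑ i ∈ Finset.Icc 1 j, (-1 : ℝ) ^ (i - 1) * (j.choose i : ℝ) / (i : ℝ) := by
      rw [Finset.sum_Icc_succ_top (by omega : 1 ≤ j + 1)]
      simp [Nat.choose_succ_self]
    rw [topzero, IH, Finset.sum_Icc_succ_top (show 1 ≤ j + 1 by omega)
      (fun k : ℕ => (1 : ℝ) / (k : ℝ))]
    push_cast
    ring

/-- `∑_{j=0}^n (−1)^{n−j}·C(n,j)·C(n+j,j)·H_j = 2·H_n`, where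
`H_m = ∑_{k=1}^m 1/k` is the `m`-th harmonic number. -/
theorem alternating_sum_harmonic (n : ℕ) :
    ∑ j ∈ Finset.range (n + 1),
        (-1 : ℝ) ^ (n - j) * (Nat.choose n j : ℝ) * (Nat.choose (n + j) j : ℝ) *
          (∑ k ∈ Finset.Icc 1 j, (1 : ℝ) / (k : ℝ)) =
      2 * ∑ k ∈ Finset.Icc 1 n, (1 : ℝ) / (k : ℝ) := by
  have step1 : ∀ j ∈ Finset.range (n + 1),
      (-1 : ℝ) ^ (n - j) * (Nat.choose n j : ℝ) * (Nat.choose (n + j) j : ℝ) *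
        (∑ k ∈ Finset.Icc 1 j, (1 : ℝ) / (k : ℝ))
      = ∑ i ∈ Finset.Icc 1 j,
          (-1 : ℝ) ^ (n - j) * (Nat.choose n j : ℝ) * (Nat.choose (n + j) j : ℝ) *
            ((-1 : ℝ) ^ (i - 1) * (j.choose i : ℝ) / (i : ℝ)) := by
    intro j _
    rw [← Finset.mul_sum, lemmaH j]
  rw [Finset.sum_congr rfl step1]
  rw [Finset.sum_comm' (t' := Finset.Icc 1 n) (s' := fun i => Finset.Icc i n)
    (by intro x y; simp only [Finset.mem_range, Finset.mem_Icc]; omega)]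
  have step2 : ∀ i ∈ Finset.Icc 1 n,
      (∑ j ∈ Finset.Icc i n,
        (-1 : ℝ) ^ (n - j) * (Nat.choose n j : ℝ) * (Nat.choose (n + j) j : ℝ) *
          ((-1 : ℝ) ^ (i - 1) * (j.choose i : ℝ) / (i : ℝ)))
      = (-1 : ℝ) ^ (i - 1) * (n.choose i : ℝ) * ((n + i).choose i : ℝ) / (i : ℝ) := by
    intro i hi
    rw [Finset.mem_Icc] at hi
    have e : ∑ j ∈ Finset.Icc i n,
        (-1 : ℝ) ^ (n - j) * (Nat.choose n j : ℝ) * (Nat.choose (n + j) j : ℝ) *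
          ((-1 : ℝ) ^ (i - 1) * (j.choose i : ℝ) / (i : ℝ))
        = ((-1 : ℝ) ^ (i - 1) / (i : ℝ)) * ∑ j ∈ Finset.Icc i n,
            (-1 : ℝ) ^ (n - j) * (Nat.choose n j : ℝ) * (Nat.choose (n + j) j : ℝ) *
              (j.choose i : ℝ) := by
      rw [Finset.mul_sum]
      apply Finset.sum_congr rfl
      intro j _
      ring
    rw [e, lemmaA n i hi.2]
    ring
  rw [Finset.sum_congr rfl step2]
  exact lemmaB n
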